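/- The formal power series identity sum over integers n of (-1)^n q^((3n^2+n)/2) = product over n >= 1 of (1 - q^n) holds in Z[[q]]. -/

import Mathlib

open Finset

/-- The `m`-th generalized pentagonal number `ω(m) = (3m² + m)/2`. -/
def pent (m : ℤ) : ℤ := (3 * m ^ 2 + m) / 2


lemma pent_two_mul (m : ℤ) : 2 * pent m = 3 * m ^ 2 + m := by
  have h : (2 : ℤ) ∣ 3 * m ^ 2 + m := by
    obtain ⟨c, hc⟩ := Int.even_mul_succ_self m
    exact ⟨m ^ 2 + c, by nlinarith⟩
  exact Int.mul_ediv_cancel' h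

lemma pent_inj {a b : ℤ} (h : pent a = pent b) : a = b := by
  have h2 : 3 * a ^ 2 + a = 3 * b ^ 2 + b := by
    have := pent_two_mul a; have := pent_two_mul b; omega
  have h3 : (a - b) * (3 * (a + b) + 1) = 0 := by ring_nf; nlinarith
  rcases mul_eq_zero.1 h3 with h4 | h4
  · omega
  · omega

open scoped Classical in
/-- Length of the maximal "staircase" run at the top of `A`. -/
noncomputable def runLen (A : Finset ℕ) : ℕ :=
  if h : ∃ j, A.sup id - j ∉ A then Nat.find h else 0

open scoped Classical in
/-- Franklin's involution. -/
noncomputable def franklin (A : Finset ℕ) : Finset ℕ :=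
  if h : A.Nonempty then
    if A.min' h ≤ runLen A then
      insert (A.sup id + 1) ((A.erase (A.min' h)).erase (A.sup id + 1 - A.min' h))
    else insert (runLen A) (insert (A.sup id - runLen A) (A.erase (A.sup id)))
  else ∅

/-- exceptional staircases -/
def isExc (A : Finset ℕ) : Prop :=
  ∃ k : ℕ, 1 ≤ k ∧ (A = Finset.Icc k (2 * k - 1) ∨ A = Finset.Icc (k + 1) (2 * k))

def pset (N : ℕ) : Finset (Finset ℕ) :=
  (Finset.Icc 1 N).powerset.filter (fun A => A.sum id = N)

lemma mem_pset {N : ℕ} {A : Finset ℕ} :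
    A ∈ pset N ↔ (∀ x ∈ A, 0 < x) ∧ A.sum id = N := by
  simp only [pset, mem_filter, mem_powerset]
  constructor
  · rintro ⟨hsub, hsum⟩
    exact ⟨fun x hx => (mem_Icc.1 (hsub hx)).1, hsum⟩
  · rintro ⟨hpos, hsum⟩
    refine ⟨fun x hx => mem_Icc.2 ⟨hpos x hx, ?_⟩, hsum⟩
    calc x = (id x : ℕ) := rfl
    _ ≤ A.sum id := Finset.single_le_sum (fun i _ => Nat.zero_le i) hx
    _ = N := hsum

lemma sup_mem {A : Finset ℕ} (h : A.Nonempty) : A.sup id ∈ A := by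
  have := A.max'_mem h
  rwa [Finset.max'_eq_sup', Finset.sup'_eq_sup] at this

lemma runLen_exists {A : Finset ℕ} (hpos : ∀ x ∈ A, 0 < x) :
    ∃ j, A.sup id - j ∉ A :=
  ⟨A.sup id, by rw [Nat.sub_self]; exact fun hc => absurd (hpos 0 hc) (lt_irrefl 0)⟩

open scoped Classical in
lemma runLen_def {A : Finset ℕ} (hex : ∃ j, A.sup id - j ∉ A) :
    runLen A = Nat.find hex := by
  rw [runLen, dif_pos hex]

lemma runLen_spec {A : Finset ℕ} (hpos : ∀ x ∈ A, 0 < x) :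
    A.sup id - runLen A ∉ A := by
  classical
  rw [runLen_def (runLen_exists hpos)]
  exact Nat.find_spec (runLen_exists hpos)

lemma mem_of_lt_runLen {A : Finset ℕ} (hpos : ∀ x ∈ A, 0 < x) {j : ℕ}
    (hj : j < runLen A) : A.sup id - j ∈ A := by
  classical
  rw [runLen_def (runLen_exists hpos)] at hj
  exact not_not.1 (Nat.find_min (runLen_exists hpos) hj)

lemma runLen_le {A : Finset ℕ} (hpos : ∀ x ∈ A, 0 < x) {k : ℕ}
    (hk : A.sup id - k ∉ A) : runLen A ≤ k := by
  classical
  rw [runLen_def (runLen_exists hpos)]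
  exact Nat.find_le hk

lemma le_runLen {A : Finset ℕ} (hpos : ∀ x ∈ A, 0 < x) {k : ℕ}
    (hk : ∀ j < k, A.sup id - j ∈ A) : k ≤ runLen A := by
  by_contra hc
  exact runLen_spec hpos (hk _ (Nat.lt_of_not_le hc))

lemma runLen_eq {A : Finset ℕ} (hpos : ∀ x ∈ A, 0 < x) {k : ℕ}
    (hmem : ∀ j < k, A.sup id - j ∈ A) (hnot : A.sup id - k ∉ A) : runLen A = k :=
  le_antisymm (runLen_le hpos hnot) (le_runLen hpos hmem)

lemma one_le_runLen {A : Finset ℕ} (hpos : ∀ x ∈ A, 0 < x) (h : A.Nonempty) :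
    1 ≤ runLen A :=
  le_runLen hpos (fun j hj => by interval_cases j; simpa using sup_mem h)

lemma runLen_le_sup {A : Finset ℕ} (hpos : ∀ x ∈ A, 0 < x) :
    runLen A ≤ A.sup id :=
  runLen_le hpos (by rw [Nat.sub_self]; exact fun hc => absurd (hpos 0 hc) (lt_irrefl 0))

lemma sup_Icc {a b : ℕ} (hab : a ≤ b) : (Finset.Icc a b).sup id = b :=
  le_antisymm (Finset.sup_le fun x hx => (mem_Icc.1 hx).2)
    (Finset.le_sup (f := id) (mem_Icc.2 ⟨hab, le_refl b⟩))

lemma runLen_Icc {a b : ℕ} (ha : 0 < a) (hab : a ≤ b) :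
    runLen (Finset.Icc a b) = b + 1 - a := by
  have hpos : ∀ x ∈ Finset.Icc a b, 0 < x := fun x hx => lt_of_lt_of_le ha (mem_Icc.1 hx).1
  refine runLen_eq hpos (fun j hj => ?_) ?_ <;> rw [sup_Icc hab]
  · exact mem_Icc.2 ⟨by omega, by omega⟩
  · rw [mem_Icc]; omega

lemma franklin_case1 {A : Finset ℕ} (hpos : ∀ x ∈ A, 0 < x) (h : A.Nonempty)
    (hne : ¬ isExc A) (hs : A.min' h ≤ runLen A) :
    (franklin A).sum id = A.sum id ∧ (franklin A).card + 1 = A.card ∧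
      (∀ x ∈ franklin A, 0 < x) ∧ ¬ isExc (franklin A) ∧ franklin (franklin A) = A := by
  set s := A.min' h with hs_def
  set M := A.sup id with hM_def
  set σ := runLen A with hσ_def
  have hsA : s ∈ A := A.min'_mem h
  have hs1 : 1 ≤ s := hpos _ hsA
  have hMA : M ∈ A := sup_mem h
  have hle : ∀ x ∈ A, x ≤ M := fun x hx => Finset.le_sup (f := id) hx
  have hmin : ∀ x ∈ A, s ≤ x := fun x hx => A.min'_le x hx
  have hsM : s ≤ M := hle _ hsA
  have hσM : σ ≤ M := runLen_le_sup hpos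
  have hgap : M - σ ∉ A := runLen_spec hpos
  have hrun : ∀ j, j < σ → M - j ∈ A := fun j hj => mem_of_lt_runLen hpos hj
  have hm1s : M + 1 - s ∈ A := by
    have e : M + 1 - s = M - (s - 1) := by omega
    rw [e]; exact hrun _ (by omega)
  have hkey : s < M + 1 - s := by
    rcases lt_or_ge s (M + 1 - s) with h' | h'
    · exact h'
    · exfalso
      have hse : s = M + 1 - s := le_antisymm (hmin _ hm1s) h'
      have hM2 : M = 2 * s - 1 := by omega
      have hAeq : A = Finset.Icc s M := by
        ext x
        rw [mem_Icc]
        constructor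
        · exact fun hx => ⟨hmin _ hx, hle _ hx⟩
        · rintro ⟨hx1, hx2⟩
          have e : x = M - (M - x) := by omega
          rw [e]; exact hrun _ (by omega)
      exact hne ⟨s, hs1, Or.inl (by rw [hAeq, hM2])⟩
  have hBdef : franklin A = insert (M + 1) ((A.erase s).erase (M + 1 - s)) := by
    rw [franklin, dif_pos h, if_pos hs]
  set B := franklin A with hB_def
  have hm1s' : M + 1 - s ∈ A.erase s := Finset.mem_erase.2 ⟨by omega, hm1s⟩
  have hfresh : M + 1 ∉ (A.erase s).erase (M + 1 - s) := fun hc => by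
    have := hle _ (Finset.mem_of_mem_erase (Finset.mem_of_mem_erase hc)); omega
  -- elements of B
  have hmemB : ∀ x, x ∈ B ↔ (x = M + 1 ∨ (x ∈ A ∧ x ≠ s ∧ x ≠ M + 1 - s)) := by
    intro x
    rw [hBdef, Finset.mem_insert, Finset.mem_erase, Finset.mem_erase]
    tauto
  -- sum
  have e1 : A.sum id = s + (A.erase s).sum id := (Finset.add_sum_erase A id hsA).symm
  have e2 : (A.erase s).sum id
      = (M + 1 - s) + ((A.erase s).erase (M + 1 - s)).sum id :=
    (Finset.add_sum_erase _ id hm1s').symm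
  have e3 : B.sum id = (M + 1) + ((A.erase s).erase (M + 1 - s)).sum id := by
    rw [hBdef, Finset.sum_insert hfresh]; rfl
  have hsum : B.sum id = A.sum id := by omega
  -- card
  have c1 : B.card = ((A.erase s).erase (M + 1 - s)).card + 1 := by
    rw [hBdef, Finset.card_insert_of_notMem hfresh]
  have c2 : ((A.erase s).erase (M + 1 - s)).card = (A.erase s).card - 1 :=
    Finset.card_erase_of_mem hm1s'
  have c3 : (A.erase s).card = A.card - 1 := Finset.card_erase_of_mem hsA
  have c4 : 2 ≤ A.card := Finset.one_lt_card.2 ⟨M + 1 - s, hm1s, s, hsA, by omega⟩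
  have hcard : B.card + 1 = A.card := by omega
  -- positivity
  have hposB : ∀ x ∈ B, 0 < x := by
    intro x hx
    rcases (hmemB x).1 hx with rfl | ⟨hxA, _, _⟩
    · omega
    · exact hpos _ hxA
  have hBne : B.Nonempty := ⟨M + 1, (hmemB _).2 (Or.inl rfl)⟩
  -- sup of B
  have hsupB : B.sup id = M + 1 := by
    refine le_antisymm (Finset.sup_le fun x hx => ?_) (Finset.le_sup (f := id) ((hmemB _).2 (Or.inl rfl)))
    rcases (hmemB x).1 hx with rfl | ⟨hxA, _, _⟩
    · exact le_refl _
    · exact le_trans (hle _ hxA) (by omega)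
  -- elements of B are > s
  have hminB : ∀ x ∈ B, s < x := by
    intro x hx
    rcases (hmemB x).1 hx with rfl | ⟨hxA, hxs, _⟩
    · omega
    · exact lt_of_le_of_ne (hmin _ hxA) (Ne.symm hxs)
  -- runLen of B is exactly s
  have hrunB : runLen B = s := by
    refine runLen_eq hposB (fun j hj => ?_) ?_
    · rw [hsupB]
      rcases Nat.eq_zero_or_pos j with rfl | hj0
      · exact (hmemB _).2 (Or.inl (by omega))
      · refine (hmemB _).2 (Or.inr ⟨?_, by omega, by omega⟩)
        have e : M + 1 - j = M - (j - 1) := by omega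
        rw [e]; exact hrun _ (by omega)
    · rw [hsupB]
      intro hc
      rcases (hmemB _).1 hc with he | ⟨_, _, hne'⟩
      · omega
      · exact hne' (by omega)
  have hminB' : runLen B < B.min' hBne := by
    rw [hrunB]; exact hminB _ (B.min'_mem hBne)
  -- franklin B = A
  have hffA : franklin B = A := by
    rw [franklin, dif_pos hBne, if_neg (not_le.2 hminB'), hrunB, hsupB]
    rw [hBdef, Finset.erase_insert hfresh, Finset.insert_erase hm1s',
      Finset.insert_erase hsA]
  -- B is not exceptional
  have hneB : ¬ isExc B := by
    rintro ⟨k, hk1, hBeq | hBeq⟩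
    · have h1 : runLen B = k := by
        rw [hBeq, runLen_Icc hk1 (by omega)]; omega
      have h2 : B.min' hBne ≤ k := Finset.min'_le _ _ (by rw [hBeq, mem_Icc]; omega)
      rw [hrunB] at h1
      rw [hrunB] at hminB'
      omega
    · have h1 : runLen B = k := by
        rw [hBeq, runLen_Icc (by omega) (by omega)]; omega
      have h2 : B.sup id = 2 * k := by rw [hBeq, sup_Icc (by omega)]
      rw [hrunB] at h1
      rw [hsupB] at h2
      omega
  exact ⟨hsum, hcard, hposB, hneB, hffA⟩

lemma franklin_case2 {A : Finset ℕ} (hpos : ∀ x ∈ A, 0 < x) (h : A.Nonempty)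
    (hne : ¬ isExc A) (hs : runLen A < A.min' h) :
    (franklin A).sum id = A.sum id ∧ A.card + 1 = (franklin A).card ∧
      (∀ x ∈ franklin A, 0 < x) ∧ ¬ isExc (franklin A) ∧ franklin (franklin A) = A := by
  set s := A.min' h with hs_def
  set M := A.sup id with hM_def
  set σ := runLen A with hσ_def
  have hsA : s ∈ A := A.min'_mem h
  have hs1 : 1 ≤ s := hpos _ hsA
  have hMA : M ∈ A := sup_mem h
  have hle : ∀ x ∈ A, x ≤ M := fun x hx => Finset.le_sup (f := id) hx
  have hmin : ∀ x ∈ A, s ≤ x := fun x hx => A.min'_le x hx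
  have hsM : s ≤ M := hle _ hsA
  have hσ1 : 1 ≤ σ := one_le_runLen hpos h
  have hσM : σ ≤ M := runLen_le_sup hpos
  have hgap : M - σ ∉ A := runLen_spec hpos
  have hrun : ∀ j, j < σ → M - j ∈ A := fun j hj => mem_of_lt_runLen hpos hj
  -- key: σ < M - σ
  have hkey : σ < M - σ := by
    by_cases hall : ∀ x ∈ A, M - σ < x
    · have hAeq : A = Finset.Icc (M - σ + 1) M := by
        ext x
        rw [mem_Icc]
        constructor
        · exact fun hx => ⟨hall _ hx, hle _ hx⟩
        · rintro ⟨hx1, hx2⟩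
          have e : x = M - (M - x) := by omega
          rw [e]; exact hrun _ (by omega)
      have hmem1 : M - σ + 1 ∈ A := by rw [hAeq, mem_Icc]; exact ⟨le_refl _, by omega⟩
      have hsval : s = M - σ + 1 := by
        have h1 : s ≤ M - σ + 1 := A.min'_le _ hmem1
        have h2 : M - σ + 1 ≤ s := by
          have := hsA; rw [hAeq, mem_Icc] at this; exact this.1
        omega
      have hsne : s ≠ σ + 1 := by
        intro he
        exact hne ⟨σ, hσ1, Or.inr (by rw [hAeq]; congr 1 <;> omega)⟩
      omega
    · push_neg at hall
      obtain ⟨x, hxA, hx⟩ := hall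
      have hx1 : x ≠ M - σ := fun he => hgap (he ▸ hxA)
      have hx2 : s ≤ x := hmin _ hxA
      omega
  have hBdef : franklin A = insert σ (insert (M - σ) (A.erase M)) := by
    rw [franklin, dif_pos h, if_neg (not_le.2 hs)]
  set B := franklin A with hB_def
  have hfresh1 : M - σ ∉ A.erase M := fun hc => hgap (Finset.mem_of_mem_erase hc)
  have hfresh2 : σ ∉ insert (M - σ) (A.erase M) := by
    rw [Finset.mem_insert]
    rintro (he | hc)
    · omega
    · have := hmin _ (Finset.mem_of_mem_erase hc); omega
  have hmemB : ∀ x, x ∈ B ↔ (x = σ ∨ x = M - σ ∨ (x ∈ A ∧ x ≠ M)) := by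
    intro x
    rw [hBdef, Finset.mem_insert, Finset.mem_insert, Finset.mem_erase]
    tauto
  -- sum
  have e1 : A.sum id = M + (A.erase M).sum id := (Finset.add_sum_erase A id hMA).symm
  have e3 : B.sum id = σ + ((M - σ) + (A.erase M).sum id) := by
    rw [hBdef, Finset.sum_insert hfresh2, Finset.sum_insert hfresh1]; rfl
  have hsum : B.sum id = A.sum id := by omega
  -- card
  have c1 : B.card = (A.erase M).card + 2 := by
    rw [hBdef, Finset.card_insert_of_notMem hfresh2, Finset.card_insert_of_notMem hfresh1]
  have c3 : (A.erase M).card = A.card - 1 := Finset.card_erase_of_mem hMA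
  have c4 : 1 ≤ A.card := Finset.card_pos.2 h
  have hcard : A.card + 1 = B.card := by omega
  -- positivity
  have hposB : ∀ x ∈ B, 0 < x := by
    intro x hx
    rcases (hmemB x).1 hx with rfl | rfl | ⟨hxA, _⟩
    · omega
    · omega
    · exact hpos _ hxA
  have hBne : B.Nonempty := ⟨σ, (hmemB _).2 (Or.inl rfl)⟩
  -- sup of B
  have hsupB : B.sup id = M - 1 := by
    have h1 : ∀ x ∈ B, x ≤ M - 1 := by
      intro x hx
      rcases (hmemB x).1 hx with rfl | rfl | ⟨hxA, hxM⟩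
      · omega
      · omega
      · have := hle _ hxA; omega
    have h2 : M - 1 ∈ B := by
      rcases Nat.lt_or_ge 1 σ with h2 | h2
      · refine (hmemB _).2 (Or.inr (Or.inr ⟨?_, by omega⟩))
        have e : M - 1 = M - 1 := rfl
        exact hrun 1 (by omega)
      · exact (hmemB _).2 (Or.inr (Or.inl (by omega)))
    exact le_antisymm (Finset.sup_le fun x hx => h1 x hx) (Finset.le_sup (f := id) h2)
  -- min' of B is σ
  have hminB : B.min' hBne = σ := by
    refine le_antisymm (B.min'_le _ ((hmemB _).2 (Or.inl rfl))) (Finset.le_min' _ _ _ ?_)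
    intro x hx
    rcases (hmemB x).1 hx with rfl | rfl | ⟨hxA, _⟩
    · exact le_refl _
    · omega
    · have := hmin _ hxA; omega
  -- runLen of B is at least σ
  have hrunB : σ ≤ runLen B := by
    refine le_runLen hposB (fun j hj => ?_)
    rw [hsupB]
    rcases Nat.lt_or_ge (j + 1) σ with h2 | h2
    · refine (hmemB _).2 (Or.inr (Or.inr ⟨?_, by omega⟩))
      have e : M - 1 - j = M - (j + 1) := by omega
      rw [e]; exact hrun _ h2
    · have e : M - 1 - j = M - σ := by omega
      exact (hmemB _).2 (Or.inr (Or.inl e))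
  -- franklin B = A
  have hffA : franklin B = A := by
    rw [franklin, dif_pos hBne, if_pos (by rw [hminB]; exact hrunB), hminB, hsupB,
      show M - 1 + 1 = M from by omega]
    rw [hBdef, Finset.erase_insert hfresh2, Finset.erase_insert hfresh1,
      Finset.insert_erase hMA]
  -- B is not exceptional
  have hneB : ¬ isExc B := by
    rintro ⟨k, hk1, hBeq | hBeq⟩
    · have h1 : B.min' hBne ≤ k := Finset.min'_le _ _ (by rw [hBeq, mem_Icc]; omega)
      have h2 : k ≤ B.min' hBne :=
        Finset.le_min' _ _ _ (fun x hx => by rw [hBeq, mem_Icc] at hx; omega)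
      have h3 : B.sup id = 2 * k - 1 := by rw [hBeq, sup_Icc (by omega)]
      rw [hminB] at h1 h2
      rw [hsupB] at h3
      omega
    · have h1 : runLen B = k := by rw [hBeq, runLen_Icc (by omega) (by omega)]; omega
      have h2 : B.min' hBne ≤ k + 1 := Finset.min'_le _ _ (by rw [hBeq, mem_Icc]; omega)
      have h3 : k + 1 ≤ B.min' hBne :=
        Finset.le_min' _ _ _ (fun x hx => by rw [hBeq, mem_Icc] at hx; omega)
      rw [hminB] at h2 h3
      omega
  exact ⟨hsum, hcard, hposB, hneB, hffA⟩

lemma franklin_pack {A : Finset ℕ} (hpos : ∀ x ∈ A, 0 < x) (h : A.Nonempty)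
    (hne : ¬ isExc A) :
    (franklin A).sum id = A.sum id ∧
      ((franklin A).card + 1 = A.card ∨ A.card + 1 = (franklin A).card) ∧
      (∀ x ∈ franklin A, 0 < x) ∧ ¬ isExc (franklin A) ∧ franklin (franklin A) = A := by
  rcases le_or_gt (A.min' h) (runLen A) with hc | hc
  · obtain ⟨h1, h2, h3, h4, h5⟩ := franklin_case1 hpos h hne hc
    exact ⟨h1, Or.inl h2, h3, h4, h5⟩
  · obtain ⟨h1, h2, h3, h4, h5⟩ := franklin_case2 hpos h hne hc
    exact ⟨h1, Or.inr h2, h3, h4, h5⟩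

open scoped Classical in
lemma sum_nonexc_eq_zero {N : ℕ} (hN : 0 < N) :
    ∑ A ∈ (pset N).filter (fun A => ¬ isExc A), (-1 : ℤ) ^ A.card = 0 := by
  classical
  have key : ∀ A ∈ (pset N).filter (fun A => ¬ isExc A),
      (franklin A).sum id = A.sum id ∧
      ((franklin A).card + 1 = A.card ∨ A.card + 1 = (franklin A).card) ∧
      (∀ x ∈ franklin A, 0 < x) ∧ ¬ isExc (franklin A) ∧ franklin (franklin A) = A := by
    intro A hA
    rw [Finset.mem_filter, mem_pset] at hA
    obtain ⟨⟨hpos, hsum⟩, hne⟩ := hA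
    have h : A.Nonempty := by
      rw [Finset.nonempty_iff_ne_empty]
      rintro rfl
      simp at hsum
      omega
    exact franklin_pack hpos h hne
  refine Finset.sum_involution (fun A _ => franklin A) ?_ ?_ ?_ ?_
  · intro A hA
    obtain ⟨_, h2, _, _, _⟩ := key A hA
    rcases h2 with h2 | h2
    · rw [← h2, pow_succ]; ring
    · rw [← h2, pow_succ]; ring
  · intro A hA _
    obtain ⟨_, h2, _, _, _⟩ := key A hA
    intro heq
    have heq' : franklin A = A := heq
    rw [heq'] at h2
    omega
  · intro A hA
    rw [Finset.mem_filter, mem_pset] at hA ⊢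
    obtain ⟨⟨hpos, hsum⟩, hne⟩ := hA
    obtain ⟨h1, _, h3, h4, _⟩ := key A (by rw [Finset.mem_filter, mem_pset]; exact ⟨⟨hpos, hsum⟩, hne⟩)
    exact ⟨⟨h3, h1.trans hsum⟩, h4⟩
  · intro A hA
    exact (key A hA).2.2.2.2

lemma sum_Icc_helper {a b : ℕ} (hab : a ≤ b + 1) :
    (Finset.Icc a b).sum id * 2 + a * (a - 1) = (b + 1) * b := by
  have h := Finset.sum_Ico_consecutive (fun i => (i : ℕ)) (Nat.zero_le a) hab
  rw [← Finset.range_eq_Ico, ← Finset.range_eq_Ico] at h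
  have h1 := Finset.sum_range_id_mul_two a
  have h2 := Finset.sum_range_id_mul_two (b + 1)
  rw [Finset.Ico_add_one_right_eq_Icc a b] at h
  simp only [id_eq] at h h1 h2 ⊢
  rw [show b + 1 - 1 = b from rfl] at h2
  rw [← h1, ← h2]
  omega

lemma exc1_sum {k : ℕ} (hk : 1 ≤ k) :
    (Finset.Icc k (2 * k - 1)).sum id * 2 + k = 3 * k ^ 2 := by
  have h := sum_Icc_helper (a := k) (b := 2 * k - 1) (by omega)
  obtain ⟨m, rfl⟩ : ∃ m, k = m + 1 := ⟨k - 1, by omega⟩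
  have e1 : 2 * (m + 1) - 1 = 2 * m + 1 := by omega
  have e2 : (m + 1) - 1 = m := by omega
  rw [e1] at h ⊢
  rw [e2] at h
  ring_nf at h ⊢
  linarith

lemma exc2_sum {k : ℕ} (hk : 1 ≤ k) :
    (Finset.Icc (k + 1) (2 * k)).sum id * 2 = 3 * k ^ 2 + k := by
  have h := sum_Icc_helper (a := k + 1) (b := 2 * k) (by omega)
  have e2 : (k + 1) - 1 = k := by omega
  rw [e2] at h
  ring_nf at h ⊢
  linarith

lemma pent_neg_nat {k N : ℕ} (h3 : 3 * k ^ 2 = 2 * N + k) : pent (-(k : ℤ)) = N := by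
  have h2 := pent_two_mul (-(k : ℤ))
  have h4 : (3 : ℤ) * (k : ℤ) ^ 2 = 2 * N + k := by exact_mod_cast h3
  nlinarith [h2, h4]

lemma pent_pos_nat {k N : ℕ} (h3 : 3 * k ^ 2 + k = 2 * N) : pent ((k : ℤ)) = N := by
  have h2 := pent_two_mul ((k : ℤ))
  have h4 : (3 : ℤ) * (k : ℤ) ^ 2 + k = 2 * N := by exact_mod_cast h3
  nlinarith [h2, h4]

open scoped Classical in
lemma sum_exc {N : ℕ} (hN : 0 < N) :
    ∑ A ∈ (pset N).filter (fun A => isExc A), (-1 : ℤ) ^ A.card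
      = ∑ᶠ m ∈ {m : ℤ | pent m = (N : ℤ)}, (-1 : ℤ) ^ m.natAbs := by
  by_cases hx : ∃ m : ℤ, pent m = (N : ℤ)
  · obtain ⟨m, hm⟩ := hx
    have hset : {m' : ℤ | pent m' = (N : ℤ)} = {m} := by
      ext x
      simp only [Set.mem_setOf_eq, Set.mem_singleton_iff]
      exact ⟨fun hx' => pent_inj (hx'.trans hm.symm), fun hx' => hx' ▸ hm⟩
    rw [hset, finsum_mem_singleton]
    have hm0 : m ≠ 0 := by
      rintro rfl
      have : pent 0 = 0 := by decide
      rw [this] at hm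
      omega
    set k := m.natAbs with hk_def
    have hk1 : 1 ≤ k := Int.natAbs_pos.2 hm0
    rcases lt_trichotomy m 0 with hsgn | rfl | hsgn
    · -- m negative: the staircase is Icc k (2k-1)
      have hmk : m = -(k : ℤ) := by omega
      have h3 : 3 * k ^ 2 = 2 * N + k := by
        have h2 := pent_two_mul m
        rw [hmk] at hm h2
        have : (3 : ℤ) * (k : ℤ) ^ 2 = 2 * N + k := by nlinarith [h2, hm]
        exact_mod_cast this
      have hA0 : Finset.Icc k (2 * k - 1) ∈ pset N := by
        rw [mem_pset]
        constructor
        · intro x hxm; rw [mem_Icc] at hxm; omega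
        · have := exc1_sum hk1; omega
      have hfilter : (pset N).filter (fun A => isExc A) = {Finset.Icc k (2 * k - 1)} := by
        ext A
        rw [Finset.mem_filter, Finset.mem_singleton]
        constructor
        · rintro ⟨hAp, k', hk', hA | hA⟩
          · rw [mem_pset] at hAp
            have hsum : A.sum id = N := hAp.2
            rw [hA] at hsum ⊢
            have h5 : 3 * k' ^ 2 = 2 * N + k' := by have := exc1_sum hk'; omega
            have h6 : pent (-(k' : ℤ)) = N := pent_neg_nat h5
            have h7 : -(k' : ℤ) = m := pent_inj (h6.trans hm.symm)
            have : k' = k := by omega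
            rw [this]
          · exfalso
            rw [mem_pset] at hAp
            have hsum : A.sum id = N := hAp.2
            rw [hA] at hsum
            have h5 : 3 * k' ^ 2 + k' = 2 * N := by have := exc2_sum hk'; omega
            have h6 : pent ((k' : ℤ)) = N := pent_pos_nat h5
            have h7 : (k' : ℤ) = m := pent_inj (h6.trans hm.symm)
            omega
        · rintro rfl
          exact ⟨hA0, ⟨k, hk1, Or.inl rfl⟩⟩
      rw [hfilter, Finset.sum_singleton, Nat.card_Icc]
      congr 1
      omega
    · exact absurd rfl hm0
    · -- m positive: the staircase is Icc (k+1) (2k)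
      have hmk : m = (k : ℤ) := by omega
      have h3 : 3 * k ^ 2 + k = 2 * N := by
        have h2 := pent_two_mul m
        rw [hmk] at hm h2
        have : (3 : ℤ) * (k : ℤ) ^ 2 + k = 2 * N := by nlinarith [h2, hm]
        exact_mod_cast this
      have hA0 : Finset.Icc (k + 1) (2 * k) ∈ pset N := by
        rw [mem_pset]
        constructor
        · intro x hxm; rw [mem_Icc] at hxm; omega
        · have := exc2_sum hk1; omega
      have hfilter : (pset N).filter (fun A => isExc A) = {Finset.Icc (k + 1) (2 * k)} := by
        ext A
        rw [Finset.mem_filter, Finset.mem_singleton]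
        constructor
        · rintro ⟨hAp, k', hk', hA | hA⟩
          · exfalso
            rw [mem_pset] at hAp
            have hsum : A.sum id = N := hAp.2
            rw [hA] at hsum
            have h5 : 3 * k' ^ 2 = 2 * N + k' := by have := exc1_sum hk'; omega
            have h6 : pent (-(k' : ℤ)) = N := pent_neg_nat h5
            have h7 : -(k' : ℤ) = m := pent_inj (h6.trans hm.symm)
            omega
          · rw [mem_pset] at hAp
            have hsum : A.sum id = N := hAp.2
            rw [hA] at hsum ⊢
            have h5 : 3 * k' ^ 2 + k' = 2 * N := by have := exc2_sum hk'; omega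
            have h6 : pent ((k' : ℤ)) = N := pent_pos_nat h5
            have h7 : (k' : ℤ) = m := pent_inj (h6.trans hm.symm)
            have : k' = k := by omega
            rw [this]
        · rintro rfl
          exact ⟨hA0, ⟨k, hk1, Or.inr rfl⟩⟩
      rw [hfilter, Finset.sum_singleton, Nat.card_Icc]
      congr 1
      omega
  · have h1 : {m : ℤ | pent m = (N : ℤ)} = ∅ := by
      ext x
      simp only [Set.mem_setOf_eq, Set.mem_empty_iff_false, iff_false]
      exact fun hc => hx ⟨x, hc⟩
    rw [h1, finsum_mem_empty]
    rw [Finset.filter_eq_empty_iff.2 ?_, Finset.sum_empty]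
    intro A hAp
    rintro ⟨k', hk', hA | hA⟩
    · rw [mem_pset] at hAp
      have hsum : A.sum id = N := hAp.2
      rw [hA] at hsum
      have h5 : 3 * k' ^ 2 = 2 * N + k' := by have := exc1_sum hk'; omega
      exact hx ⟨-(k' : ℤ), pent_neg_nat h5⟩
    · rw [mem_pset] at hAp
      have hsum : A.sum id = N := hAp.2
      rw [hA] at hsum
      have h5 : 3 * k' ^ 2 + k' = 2 * N := by have := exc2_sum hk'; omega
      exact hx ⟨(k' : ℤ), pent_pos_nat h5⟩

open PowerSeries in
open scoped Classical in
lemma coeff_prod_eq (N : ℕ) :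
    (PowerSeries.coeff (R := ℤ) N)
        (∏ n ∈ Finset.range (N + 1), (1 - PowerSeries.X ^ (n + 1)))
      = ∑ A ∈ pset N, (-1 : ℤ) ^ A.card := by
  have h0 : ∀ n ∈ Finset.range (N + 1),
      (1 : ℤ⟦X⟧) - X ^ (n + 1) = (-X ^ (n + 1)) + 1 := fun n _ => by ring
  rw [Finset.prod_congr rfl h0, Finset.prod_add]
  simp only [Finset.prod_const_one, mul_one]
  have h1 : ∀ t : Finset ℕ, (∏ i ∈ t, (-X ^ (i + 1) : ℤ⟦X⟧))
      = PowerSeries.C (R := ℤ) ((-1 : ℤ) ^ t.card) * X ^ (∑ i ∈ t, (i + 1)) := by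
    intro t
    calc ∏ i ∈ t, (-X ^ (i + 1) : ℤ⟦X⟧)
        = ∏ i ∈ t, ((-1 : ℤ⟦X⟧) * X ^ (i + 1)) := by
          refine Finset.prod_congr rfl fun i _ => by ring
      _ = (∏ _i ∈ t, (-1 : ℤ⟦X⟧)) * ∏ i ∈ t, (X : ℤ⟦X⟧) ^ (i + 1) :=
          Finset.prod_mul_distrib
      _ = (-1 : ℤ⟦X⟧) ^ t.card * X ^ (∑ i ∈ t, (i + 1)) := by
          rw [Finset.prod_const, Finset.prod_pow_eq_pow_sum]
      _ = PowerSeries.C (R := ℤ) ((-1 : ℤ) ^ t.card) * X ^ (∑ i ∈ t, (i + 1)) := by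
          rw [map_pow, map_neg, map_one]
  rw [Finset.sum_congr rfl fun t _ => h1 t, map_sum]
  have h2 : ∀ t : Finset ℕ,
      (PowerSeries.coeff (R := ℤ) N) (PowerSeries.C (R := ℤ) ((-1 : ℤ) ^ t.card) * X ^ (∑ i ∈ t, (i + 1)))
      = if ∑ i ∈ t, (i + 1) = N then (-1 : ℤ) ^ t.card else 0 := by
    intro t
    rw [PowerSeries.coeff_C_mul, PowerSeries.coeff_X_pow]
    by_cases hc : ∑ i ∈ t, (i + 1) = N
    · rw [if_pos hc, if_pos hc.symm, mul_one]
    · rw [if_neg hc, if_neg (fun h => hc h.symm), mul_zero]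
  rw [Finset.sum_congr rfl fun t _ => h2 t, ← Finset.sum_filter]
  -- now a bijection t ↦ t.map succ
  refine Finset.sum_bij' (fun t _ => t.map ⟨Nat.succ, Nat.succ_injective⟩)
    (fun A _ => A.image (· - 1)) ?_ ?_ ?_ ?_ ?_
  · -- maps into pset N
    intro t ht
    rw [Finset.mem_filter, Finset.mem_powerset] at ht
    rw [mem_pset]
    constructor
    · intro x hxm
      rw [Finset.mem_map] at hxm
      obtain ⟨i, _, rfl⟩ := hxm
      exact Nat.succ_pos i
    · rw [Finset.sum_map]
      exact ht.2
  · -- inverse maps into the filter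
    intro A hA
    rw [mem_pset] at hA
    obtain ⟨hpos, hsum⟩ := hA
    rw [Finset.mem_filter, Finset.mem_powerset]
    constructor
    · intro x hxm
      rw [Finset.mem_image] at hxm
      obtain ⟨y, hy, rfl⟩ := hxm
      rw [Finset.mem_range]
      have h3 : y ≤ A.sum id := Finset.single_le_sum (fun i _ => Nat.zero_le (id i)) hy
      rw [hsum] at h3
      omega
    · have hinj : Set.InjOn (· - 1) A := by
        intro x hx y hy hxy
        have := hpos _ hx; have := hpos _ hy
        simp only at hxy
        omega
      rw [Finset.sum_image hinj]
      calc ∑ x ∈ A, (x - 1 + 1) = ∑ x ∈ A, x :=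
            Finset.sum_congr rfl fun x hx => by have := hpos _ hx; omega
        _ = N := hsum
  · -- left inverse
    intro t ht
    ext x
    simp only [Finset.mem_image, Finset.mem_map, Function.Embedding.coeFn_mk]
    constructor
    · rintro ⟨y, ⟨i, hi, rfl⟩, rfl⟩
      simpa using hi
    · intro hx
      exact ⟨x + 1, ⟨x, hx, rfl⟩, by omega⟩
  · -- right inverse
    intro A hA
    rw [mem_pset] at hA
    obtain ⟨hpos, _⟩ := hA
    ext x
    simp only [Finset.mem_map, Finset.mem_image, Function.Embedding.coeFn_mk]
    constructor
    · rintro ⟨y, ⟨z, hz, rfl⟩, rfl⟩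
      have := hpos _ hz
      have e : z - 1 + 1 = z := by omega
      rw [show (z-1).succ = z - 1 + 1 from rfl, e]
      exact hz
    · intro hx
      exact ⟨x - 1, ⟨x, hx, rfl⟩, by have := hpos _ hx; omega⟩
  · -- values agree
    intro t ht
    rw [Finset.card_map]

/-- Euler's pentagonal number theorem in `ℤ[[q]]`, stated coefficient-wise: the `N`-th
coefficient of `∏_{n ≥ 1} (1 - q^n)` (only factors with `n ≤ N + 1` contribute) equals
the sum of `(-1)^m` over all integers `m` with `(3m² + m)/2 = N`. -/
theorem pentagonal_number_theorem (N : ℕ) :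
    (PowerSeries.coeff (R := ℤ) N)
        (∏ n ∈ Finset.range (N + 1), (1 - PowerSeries.X ^ (n + 1)))
      = ∑ᶠ m ∈ {m : ℤ | pent m = (N : ℤ)}, (-1 : ℤ) ^ m.natAbs := by
  classical
  rcases Nat.eq_zero_or_pos N with rfl | hN
  · rw [coeff_prod_eq]
    have hp : pset 0 = {∅} := by
      ext A
      rw [mem_pset, Finset.mem_singleton]
      constructor
      · rintro ⟨hpos, hsum⟩
        rw [Finset.eq_empty_iff_forall_notMem]
        intro x hx
        have h1 := hpos x hx
        have h2 : x ≤ A.sum id := Finset.single_le_sum (fun i _ => Nat.zero_le (id i)) hx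
        omega
      · rintro rfl
        exact ⟨fun x hx => absurd hx (Finset.notMem_empty x), rfl⟩
    rw [hp, Finset.sum_singleton, Finset.card_empty, pow_zero]
    have hset : {m : ℤ | pent m = ((0 : ℕ) : ℤ)} = {0} := by
      ext x
      simp only [Set.mem_setOf_eq, Set.mem_singleton_iff, Nat.cast_zero]
      constructor
      · intro hx
        have h0 : pent 0 = 0 := by decide
        exact pent_inj (hx.trans h0.symm)
      · rintro rfl
        decide
    rw [hset, finsum_mem_singleton]
    rfl
  · rw [coeff_prod_eq,
      ← Finset.sum_filter_add_sum_filter_not (pset N) (fun A => isExc A)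
        (fun A => (-1 : ℤ) ^ A.card),
      sum_nonexc_eq_zero hN, add_zero, sum_exc hN]
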